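/- (The Kesava Menon norm preserves degree; its core has squared roots.) Let R be a commutative ring, k ≥ 1, and λ_1, …, λ_k ∈ R. Let f : ℕ → R be the sequence whose generating function is ∏_{i=1}^{k} 1/(1 − λ_i y), i.e. (∏_{i=1}^{k} (1 − λ_i y)) · (∑_{n≥0} f_n y^n) = 1 in R⟦y⟧. Then the norm sequence N(f)(n) = ∑_{j=0}^{2n} (−1)^j f(j) f(2n−j) satisfies (∏_{i=1}^{k} (1 − λ_i² y)) · (∑_{n≥0} N(f)_n y^n) = 1 in R⟦y⟧; that is, N(f) is the generalized Fibonacci sequence whose core polynomial has roots λ_1², …, λ_k². In particular, if all λ_i are nonzero, the norm has the same degree k as f. -/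

import Mathlib

/-- The local Kesava Menon norm of a sequence:
`N(f)(n) = ∑_{j=0}^{2n} (−1)^j f(j) f(2n−j)`. -/
def kmNorm {R : Type*} [CommRing R] (f : ℕ → R) : ℕ → R :=
  fun n => ∑ j ∈ Finset.range (2 * n + 1), (-1 : R) ^ j * f j * f (2 * n - j)

open PowerSeries Finset

section KM

variable {R : Type*} [CommRing R]

/-- Substitution `X ↦ X²` on power series, defined coefficientwise. -/
noncomputable def kmSq (h : PowerSeries R) : PowerSeries R :=
  PowerSeries.mk fun n => if Even n then PowerSeries.coeff (n / 2) h else 0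

lemma kmSq_coeff_even (h : PowerSeries R) (n : ℕ) :
    coeff (2 * n) (kmSq h) = coeff n h := by
  simp only [kmSq, coeff_mk, if_pos (even_two_mul n)]
  rw [show 2 * n / 2 = n by omega]

lemma kmSq_coeff_odd (h : PowerSeries R) {n : ℕ} (hn : Odd n) :
    coeff n (kmSq h) = 0 := by
  simp [kmSq, Nat.not_even_iff_odd.mpr hn]

lemma kmSq_one : kmSq (1 : PowerSeries R) = 1 := by
  ext n
  rcases Nat.even_or_odd n with ⟨m, rfl⟩ | hn
  · rw [show m + m = 2 * m by ring, kmSq_coeff_even]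
    simp only [coeff_one]
    split_ifs <;> first | rfl | omega
  · rw [kmSq_coeff_odd _ hn, coeff_one, if_neg]
    rw [Nat.odd_iff] at hn
    omega

lemma km_sum_range_double {M : Type*} [AddCommMonoid M] (m : ℕ) (g : ℕ → M)
    (hg : ∀ i, Odd i → g i = 0) :
    ∑ i ∈ Finset.range (2 * m + 1), g i = ∑ i ∈ Finset.range (m + 1), g (2 * i) := by
  rw [← Finset.sum_image (f := g) (g := fun i => 2 * i) (by intro a _ b _ h; simp only at h; omega)]
  symm
  apply Finset.sum_subset
  · intro x hx
    simp only [Finset.mem_image, Finset.mem_range] at hx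
    obtain ⟨i, hi, rfl⟩ := hx
    refine Finset.mem_range.mpr ?_
    show 2 * i < 2 * m + 1
    omega
  · intro x hx hx2
    apply hg
    simp only [Finset.mem_range] at hx
    rw [Nat.odd_iff]
    by_contra h
    exact hx2 (Finset.mem_image.mpr ⟨x / 2, Finset.mem_range.mpr (by omega),
      show 2 * (x / 2) = x by omega⟩)

lemma kmSq_mul (h g : PowerSeries R) : kmSq (h * g) = kmSq h * kmSq g := by
  ext n
  rcases Nat.even_or_odd n with ⟨m, rfl⟩ | hn
  · rw [show m + m = 2 * m by ring, kmSq_coeff_even, coeff_mul, coeff_mul,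
      Finset.Nat.sum_antidiagonal_eq_sum_range_succ_mk,
      Finset.Nat.sum_antidiagonal_eq_sum_range_succ_mk,
      km_sum_range_double m _ ?_]
    · apply Finset.sum_congr rfl
      intro i hi
      simp only [Finset.mem_range] at hi
      rw [kmSq_coeff_even, show 2 * m - 2 * i = 2 * (m - i) by omega, kmSq_coeff_even]
    · intro i hi
      rw [kmSq_coeff_odd _ hi, zero_mul]
  · rw [kmSq_coeff_odd _ hn, coeff_mul, Finset.Nat.sum_antidiagonal_eq_sum_range_succ_mk]
    symm
    apply Finset.sum_eq_zero
    intro i hi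
    simp only [Finset.mem_range] at hi
    rcases Nat.even_or_odd i with hie | hio
    · have : Odd (n - i) := by
        rw [Nat.odd_iff] at hn ⊢; rw [Nat.even_iff] at hie; omega
      rw [kmSq_coeff_odd _ this, mul_zero]
    · rw [kmSq_coeff_odd _ hio, zero_mul]

lemma kmSq_one_sub (a : R) :
    kmSq (1 - PowerSeries.C a * X) = 1 - PowerSeries.C a * X ^ 2 := by
  ext n
  have hrhs : (coeff n) (1 - PowerSeries.C a * X ^ 2)
      = (if n = 0 then 1 else 0) - a * (if n = 2 then 1 else 0) := by
    simp [coeff_X_pow]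
  rcases Nat.even_or_odd n with ⟨m, rfl⟩ | hn
  · rw [show m + m = 2 * m by ring] at hrhs ⊢
    rw [kmSq_coeff_even, hrhs]
    simp only [map_sub, coeff_one, coeff_C_mul, coeff_X]
    split_ifs <;> first | ring1 | omega
  · rw [kmSq_coeff_odd _ hn, hrhs]
    rw [Nat.odd_iff] at hn
    split_ifs <;> first | ring1 | omega

lemma km_rescale_C (a r : R) : rescale a (PowerSeries.C r) = PowerSeries.C r := by
  ext n
  rw [coeff_rescale, coeff_C]
  split_ifs with h
  · subst h; simp
  · exact mul_zero _

end KM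

/-- The Kesava Menon norm preserves degree: if `f` has generating function
`∏ᵢ 1/(1 − λᵢ y)` then `N(f)` has generating function `∏ᵢ 1/(1 − λᵢ² y)`,
i.e. the core of the norm has roots `λ₁², …, λ_k²`. -/
theorem kmNorm_core_roots {R : Type*} [CommRing R] (k : ℕ) (hk : 1 ≤ k)
    (lam : Fin k → R) (f : ℕ → R)
    (hf : (∏ i, (1 - PowerSeries.C (lam i) * PowerSeries.X)) *
      PowerSeries.mk f = 1) :
    (∏ i, (1 - PowerSeries.C (lam i ^ 2) * PowerSeries.X)) *
      PowerSeries.mk (kmNorm f) = 1 := by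
  classical
  set A : PowerSeries R := ∏ i, (1 - PowerSeries.C (lam i) * PowerSeries.X) with hA
  set B : PowerSeries R := PowerSeries.mk f with hB
  -- Apply the ring hom rescale (-1) to hf
  have hf' : (∏ i, (1 + PowerSeries.C (lam i) * PowerSeries.X)) *
      PowerSeries.rescale (-1) B = 1 := by
    have := congrArg (PowerSeries.rescale (-1 : R)) hf
    rw [map_mul, map_one, map_prod] at this
    convert this using 3 with i
    rw [map_sub, map_one, map_mul, km_rescale_C, PowerSeries.rescale_neg_one_X]
    ring
  -- key identity: kmSq of the target product equals A * (rescale (-1) A)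
  have hC : kmSq (∏ i, (1 - PowerSeries.C (lam i ^ 2) * PowerSeries.X))
      = A * ∏ i, (1 + PowerSeries.C (lam i) * PowerSeries.X) := by
    have h1 : kmSq (∏ i, (1 - PowerSeries.C (lam i ^ 2) * PowerSeries.X))
        = ∏ i, kmSq (1 - PowerSeries.C (lam i ^ 2) * PowerSeries.X) := by
      induction (Finset.univ : Finset (Fin k)) using Finset.induction with
      | empty => simp [kmSq_one]
      | insert _ _ h ih => rw [Finset.prod_insert h, Finset.prod_insert h, kmSq_mul, ih]
    rw [h1, hA, ← Finset.prod_mul_distrib]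
    apply Finset.prod_congr rfl
    intro i _
    rw [kmSq_one_sub, map_pow]
    ring
  -- kmSq of mk (kmNorm f) equals B * rescale (-1) B
  have hD : kmSq (PowerSeries.mk (kmNorm f)) = B * PowerSeries.rescale (-1) B := by
    ext n
    rw [hB, PowerSeries.rescale_mk, PowerSeries.coeff_mul,
      Finset.Nat.sum_antidiagonal_eq_sum_range_succ_mk]
    simp only [PowerSeries.coeff_mk]
    rcases Nat.even_or_odd n with ⟨m, rfl⟩ | hn
    · rw [show m + m = 2 * m by ring, kmSq_coeff_even, PowerSeries.coeff_mk, kmNorm]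
      apply Finset.sum_congr rfl
      intro j hj
      simp only [Finset.mem_range] at hj
      have e1 : (-1 : R) ^ (2 * m - j) * (-1 : R) ^ j = 1 := by
        rw [← pow_add, show 2 * m - j + j = 2 * m by omega]
        exact Even.neg_one_pow ⟨m, by ring⟩
      have e2 : (-1 : R) ^ j * (-1 : R) ^ j = 1 := by
        rw [← pow_add]; exact Even.neg_one_pow ⟨j, rfl⟩
      have h1 : (-1 : R) ^ (2 * m - j) = (-1 : R) ^ j := by
        calc (-1 : R) ^ (2 * m - j) = (-1) ^ (2 * m - j) * ((-1) ^ j * (-1) ^ j) := by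
              rw [e2, mul_one]
          _ = ((-1) ^ (2 * m - j) * (-1) ^ j) * (-1) ^ j := by ring
          _ = (-1) ^ j := by rw [e1, one_mul]
      rw [h1]; ring
    · rw [kmSq_coeff_odd _ hn]
      symm
      apply Finset.sum_involution (g := fun j _ => n - j)
      · intro j hj
        simp only [Finset.mem_range] at hj
        have hle : j ≤ n := by omega
        rw [Nat.sub_sub_self hle]
        have : (-1 : R) ^ (n - j) = -(-1 : R) ^ j := by
          rcases Nat.even_or_odd j with hje | hjo
          · have : Odd (n - j) := by
              rw [Nat.odd_iff] at hn ⊢; rw [Nat.even_iff] at hje; omega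
            rw [this.neg_one_pow, hje.neg_one_pow]
          · have : Even (n - j) := by
              rw [Nat.odd_iff] at hn hjo; rw [Nat.even_iff]; omega
            rw [this.neg_one_pow, hjo.neg_one_pow]; ring
        rw [this]; ring
      · intro j hj _
        rw [Nat.odd_iff] at hn
        omega
      · intro j hj
        simp only [Finset.mem_range] at hj ⊢
        omega
      · intro j hj
        simp only [Finset.mem_range] at hj
        omega
  -- conclude
  have key : kmSq ((∏ i, (1 - PowerSeries.C (lam i ^ 2) * PowerSeries.X)) *
      PowerSeries.mk (kmNorm f)) = 1 := by
    rw [kmSq_mul, hC, hD, show A * (∏ i, (1 + PowerSeries.C (lam i) * PowerSeries.X)) *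
      (B * PowerSeries.rescale (-1) B)
      = (A * B) * ((∏ i, (1 + PowerSeries.C (lam i) * PowerSeries.X)) *
        PowerSeries.rescale (-1) B) by ring, hf, hf']
    ring
  ext n
  have := congrArg (PowerSeries.coeff (2 * n)) key
  rw [kmSq_coeff_even] at this
  rcases Nat.eq_zero_or_pos n with rfl | hpos
  · simpa using this
  · rw [this, PowerSeries.coeff_one, PowerSeries.coeff_one,
      if_neg (show ¬2 * n = 0 by omega), if_neg (show ¬n = 0 by omega)]
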